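/- Let g_q ∈ ℂ[x,y] be the minimal polynomial of the truncation s_q(x) of the Puiseux series of an irreducible plane curve with semigroup ⟨β̄₀,…,β̄_g⟩, given by g_q(x,y) = ∏_{ε^{β₀/e_{q−1}} = 1} (y − s_q(ε^{β₀} x)). Then g_q is monic in y with deg_y(g_q) = β̄₀/e_{q−1}, and the branch D_q defined by g_q satisfies [C, D_q]₀ = β̄_q (maximal contact of genus q − 1). -/

import Mathlib

noncomputable section

lemma my_card_multiples (r N : ℕ) (h : r ∣ N) :
    ((Finset.range N).filter (fun k => r ∣ k)).card = N / r := by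
  rcases Nat.eq_zero_or_pos r with rfl | hr
  · obtain rfl : N = 0 := by simpa using h
    simp
  obtain ⟨s, rfl⟩ := h
  rw [Nat.mul_div_cancel_left _ hr]
  have himg : (Finset.range (r * s)).filter (fun k => r ∣ k)
      = (Finset.range s).image (fun c => r * c) := by
    ext k
    simp only [Finset.mem_filter, Finset.mem_range, Finset.mem_image]
    constructor
    · rintro ⟨hk, c, rfl⟩
      exact ⟨c, by exact (mul_lt_mul_iff_right₀ hr).mp hk, rfl⟩
    · rintro ⟨c, hc, rfl⟩
      exact ⟨(mul_lt_mul_iff_right₀ hr).mpr hc, c, rfl⟩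
  rw [himg, Finset.card_image_of_injective _ (mul_right_injective₀ hr.ne'), Finset.card_range]

lemma my_aeval_inj (b : ℕ) (hb : 0 < b) :
    Function.Injective ⇑((Polynomial.aeval
      ((PowerSeries.X : PowerSeries ℂ) ^ b)).toRingHom : Polynomial ℂ →+* PowerSeries ℂ) := by
  rw [injective_iff_map_eq_zero]
  intro p hp
  by_contra h0
  have key : PowerSeries.coeff (p.natDegree * b)
      ((Polynomial.aeval ((PowerSeries.X : PowerSeries ℂ) ^ b)) p) = p.leadingCoeff := by
    rw [Polynomial.aeval_eq_sum_range, map_sum]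
    have : ∀ i ∈ Finset.range (p.natDegree + 1),
        PowerSeries.coeff (p.natDegree * b)
          (p.coeff i • ((PowerSeries.X : PowerSeries ℂ) ^ b) ^ i)
        = if i = p.natDegree then p.leadingCoeff else 0 := by
      intro i hi
      rw [← pow_mul]
      by_cases hid : i = p.natDegree
      · subst hid
        rw [map_smul, PowerSeries.coeff_X_pow, mul_comm p.natDegree b, if_pos rfl,
          smul_eq_mul, mul_one, Polynomial.leadingCoeff, if_pos rfl]
      · have : ¬ (p.natDegree * b = b * i) := by
          rw [mul_comm p.natDegree b]
          exact fun hcon => hid ((Nat.eq_of_mul_eq_mul_left hb hcon).symm)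
        simp [PowerSeries.coeff_X_pow, this, hid]
    rw [Finset.sum_congr rfl this, Finset.sum_ite_eq' (Finset.range (p.natDegree + 1))]
    simp
  rw [show ((Polynomial.aeval ((PowerSeries.X : PowerSeries ℂ) ^ b)) p)
      = ((Polynomial.aeval ((PowerSeries.X : PowerSeries ℂ) ^ b)).toRingHom p) from rfl,
    hp] at key
  simp only [map_zero] at key
  exact h0 (Polynomial.leadingCoeff_eq_zero.mp key.symm)

lemma my_order_prod {ι : Type*} (s : Finset ι) (f : ι → PowerSeries ℂ) :
    (∏ i ∈ s, f i).order = ∑ i ∈ s, (f i).order := by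
  classical
  induction s using Finset.cons_induction with
  | empty => simp [PowerSeries.order_one]
  | cons i s hi ih =>
      rw [Finset.prod_cons, Finset.sum_cons, PowerSeries.order_mul, ih]

lemma my_rescale_C (a r : ℂ) :
    PowerSeries.rescale a (PowerSeries.C r) = PowerSeries.C r := by
  ext n
  simp only [PowerSeries.coeff_rescale, PowerSeries.coeff_C]
  split_ifs with h
  · subst h; simp
  · simp


/-- Let `C` be an irreducible plane curve with Newton–Puiseux
parametrization `(t^{β₀}, ∑_{j≥β₀} a_j t^j)`, characteristic exponents `β₀ < β₁ < ⋯ < β_g`,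
`e_i = gcd(β₀,…,β_i)` and semigroup generators `β̄₀,…,β̄_g` (with
`β̄_{i+1} = n_i β̄_i + β_{i+1} − β_i`).  Let `g_q ∈ ℂ[x,y]` be the minimal polynomial of
the truncation `s_q(x)` of the Puiseux series of `C`, given by
`g_q(x,y) = ∏_{ε^{β₀/e_{q−1}} = 1} (y − s_q(ε^{β₀} x))` (expressed below after the
substitution `x ↦ t^{β₀}`, under which `s_q(ε^{β₀}x)` becomes the rescaled truncated
series `σ(εt)`).  Then `g_q` is monic in `y` with `deg_y g_q = β₀/e_{q−1}`, and the branch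
`D_q` defined by `g_q` has maximal contact of genus `q − 1` with `C`:
`[C, D_q]₀ = ord_t g_q(t^{β₀}, ∑_{j≥β₀} a_j t^j) = β̄_q`. -/
theorem semiroot_monic_degree_contact
    (g q : ℕ) (hq1 : 1 ≤ q) (hqg : q ≤ g)
    -- the coefficients of the Puiseux series of `C`
    (a : ℕ → ℂ) (β : ℕ → ℕ) (hβmono : ∀ i, i < g → β i < β (i + 1)) (hβ0 : 0 < β 0)
    (ha0 : ∀ j, j < β 0 → a j = 0)
    (e : ℕ → ℕ) (he : ∀ i, e i = Finset.gcd (Finset.range (i + 1)) β) (heg : e g = 1)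
    -- `β_i` (for `1 ≤ i ≤ g`) are the characteristic exponents of the series
    (hchar : ∀ i, 1 ≤ i → i ≤ g →
      a (β i) ≠ 0 ∧ ¬ e (i - 1) ∣ β i ∧ ∀ j, a j ≠ 0 → ¬ e (i - 1) ∣ j → β i ≤ j)
    -- the generators `β̄` of the value semigroup
    (n : ℕ → ℕ) (hn : ∀ i, 1 ≤ i → n i = e (i - 1) / e i)
    (β' : ℕ → ℕ) (hβ'0 : β' 0 = β 0) (hβ'1 : β' 1 = β 1)
    (hβ'rec : ∀ i, 1 ≤ i → i < g → β' (i + 1) + β i = n i * β' i + β (i + 1))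
    -- the truncated series `σ` (i.e. `s_q(x)` written in the variable `t`, `x = t^{β₀}`)
    (σ : PowerSeries ℂ)
    (hσ : σ = PowerSeries.mk fun j => if e (q - 1) ∣ j ∧ j < β q then a j else 0)
    -- a primitive `β₀/e_{q−1}`-th root of unity
    (ζ : ℂ) (hζ : IsPrimitiveRoot ζ (β 0 / e (q - 1)))
    -- the polynomial `g_q ∈ ℂ[x][y]`, characterized by its image under `x ↦ t^{β₀}`
    (gq : Polynomial (Polynomial ℂ))
    (hgq : Polynomial.map (Polynomial.aeval
        ((PowerSeries.X : PowerSeries ℂ) ^ β 0)).toRingHom gq =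
      ∏ k ∈ Finset.range (β 0 / e (q - 1)),
        (Polynomial.X - Polynomial.C (PowerSeries.rescale (ζ ^ k) σ))) :
    gq.Monic ∧ gq.natDegree = β 0 / e (q - 1) ∧
    PowerSeries.order
      (Polynomial.eval (PowerSeries.mk fun j => if β 0 ≤ j then a j else 0)
        (Polynomial.map (Polynomial.aeval
          ((PowerSeries.X : PowerSeries ℂ) ^ β 0)).toRingHom gq)) =
      (β' q : ℕ∞) := by
  classical
  set φ : Polynomial ℂ →+* PowerSeries ℂ :=
    (Polynomial.aeval ((PowerSeries.X : PowerSeries ℂ) ^ β 0)).toRingHom with hφ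
  have hinj : Function.Injective ⇑φ := my_aeval_inj (β 0) hβ0
  have hedvdβ : ∀ m i, i ≤ m → e m ∣ β i := by
    intro m i him
    rw [he m]
    exact Finset.gcd_dvd (Finset.mem_range.mpr (Nat.lt_succ_of_le him))
  have hepos : ∀ m, 0 < e m := fun m => Nat.pos_of_dvd_of_pos (hedvdβ m 0 (Nat.zero_le m)) hβ0
  have heemono : ∀ m m', m' ≤ m → e m ∣ e m' := by
    intro m m' hmm
    rw [he m']
    exact Finset.dvd_gcd fun i hi =>
      hedvdβ m i (le_trans (Nat.lt_succ_iff.mp (Finset.mem_range.mp hi)) hmm)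
  set N := β 0 / e (q - 1) with hN
  have heN : e (q - 1) * N = β 0 := Nat.mul_div_cancel' (hedvdβ (q-1) 0 (Nat.zero_le _))
  have hNpos : 0 < N :=
    Nat.div_pos (Nat.le_of_dvd hβ0 (hedvdβ (q-1) 0 (Nat.zero_le _))) (hepos (q-1))
  have hβle : ∀ i j, i ≤ j → j ≤ g → β i ≤ β j := by
    intro i j hij
    induction j, hij using Nat.le_induction with
    | base => exact fun _ => le_refl _
    | succ j hij ih => exact fun hj => le_trans (ih (by omega)) (le_of_lt (hβmono j (by omega)))
  have hβlt : ∀ i j, i < j → j ≤ g → β i < β j := fun i j hij hjg =>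
    lt_of_lt_of_le (hβmono i (by omega)) (hβle (i+1) j hij hjg)
  have he'q : e (q-1) = Finset.gcd (Finset.range q) β := by
    rw [he (q-1), Nat.sub_add_cancel hq1]
  have he'β : ∀ i, i < q → e (q-1) ∣ β i := fun i hi => hedvdβ (q-1) i (by omega)
  have hζN : ζ ^ N = 1 := hζ.pow_eq_one
  have hzb0 : ∀ k : ℕ, (ζ^k)^(β 0) = 1 := by
    intro k
    have h1 : (ζ^k)^(β 0) = (ζ^N)^(e (q-1) * k) := by
      rw [← pow_mul, ← pow_mul, ← heN]; ring_nf
    rw [h1, hζN, one_pow]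
  have hzE : ∀ (k r : ℕ), (∀ i, 1 ≤ i → i ≤ r → (ζ^k)^(β i) = 1) →
      (ζ^k)^(Finset.gcd (Finset.range (r+1)) β) = 1 := by
    intro k r hall
    rw [← orderOf_dvd_iff_pow_eq_one]
    apply Finset.dvd_gcd
    intro i hi
    rw [Finset.mem_range] at hi
    rcases Nat.eq_zero_or_pos i with rfl | hip
    · exact orderOf_dvd_of_pow_eq_one (hzb0 k)
    · exact orderOf_dvd_of_pow_eq_one (hall i hip (by omega))
  have hpowdvd : ∀ (z : ℂ) (r j : ℕ), r ∣ j → z ^ r = 1 → z ^ j = 1 := by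
    intro z r j hrj h1
    obtain ⟨w, rfl⟩ := hrj
    rw [pow_mul, h1, one_pow]
  have hζ0 : ζ ≠ 0 := by
    intro h
    rw [h, zero_pow hNpos.ne'] at hζN
    exact zero_ne_one hζN
  -- monic and degree
  have hmonR : (∏ k ∈ Finset.range N,
      (Polynomial.X - Polynomial.C (PowerSeries.rescale (ζ ^ k) σ))).Monic :=
    Polynomial.monic_prod_of_monic _ _ fun k _ => Polynomial.monic_X_sub_C _
  have hdegR : (∏ k ∈ Finset.range N,
      (Polynomial.X - Polynomial.C (PowerSeries.rescale (ζ ^ k) σ))).natDegree = N := by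
    rw [Polynomial.natDegree_prod_of_monic _ _ fun k _ => Polynomial.monic_X_sub_C _]
    simp [Polynomial.natDegree_X_sub_C]
  have hgqmon : gq.Monic := Polynomial.monic_of_injective hinj (by rw [hgq]; exact hmonR)
  have hgqdeg : gq.natDegree = N := by
    rw [← Polynomial.natDegree_map_eq_of_injective hinj gq, hgq, hdegR]
  refine ⟨hgqmon, hgqdeg, ?_⟩
  by_cases hcop : Nat.gcd N (e (q-1)) = 1
  · -- main case
    rw [hgq, Polynomial.eval_prod]
    simp only [Polynomial.eval_sub, Polynomial.eval_X, Polynomial.eval_C]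
    rw [my_order_prod]
    have hex : ∀ k : ℕ, ∃ m, m = q ∨ (1 ≤ m ∧ (ζ^k)^(β m) ≠ 1) := fun k => ⟨q, Or.inl rfl⟩
    set M : ℕ → ℕ := fun k => Nat.find (hex k) with hMdef
    have hMspec : ∀ k, M k = q ∨ (1 ≤ M k ∧ (ζ^k)^(β (M k)) ≠ 1) := fun k => Nat.find_spec (hex k)
    have hMle : ∀ k, M k ≤ q := fun k => Nat.find_min' (hex k) (Or.inl rfl)
    have hM1 : ∀ k, 1 ≤ M k := by
      intro k
      rcases hMspec k with h | h
      · omega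
      · exact h.1
    have hMmin : ∀ k m, 1 ≤ m → m < M k → (ζ^k)^(β m) = 1 := by
      intro k m h1 hm
      have h2 := Nat.find_min (hex k) hm
      push_neg at h2
      exact h2.2 h1
    have hMgt : ∀ k m, m < q →
        (m < M k ↔ ∀ m', 1 ≤ m' → m' ≤ m → (ζ^k)^(β m') = 1) := by
      intro k m hmq
      constructor
      · intro h m' h1 hm'
        exact hMmin k m' h1 (lt_of_le_of_lt hm' h)
      · intro hall
        rw [hMdef]
        simp only []
        rw [Nat.lt_find_iff]
        intro m' hm'
        rintro (rfl | ⟨h1, hne⟩)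
        · omega
        · exact hne (hall m' h1 hm')
    have horder : ∀ k,
        (PowerSeries.mk (fun j => if β 0 ≤ j then a j else 0)
          - PowerSeries.rescale (ζ^k) σ).order = ((β (M k) : ℕ) : ℕ∞) := by
      intro k
      rw [PowerSeries.order_eq_nat]
      constructor
      · by_cases hMq : M k = q
        · rw [hMq]
          have h1 : β 0 ≤ β q := hβle 0 q (Nat.zero_le q) hqg
          simp only [map_sub, hσ, PowerSeries.coeff_rescale, PowerSeries.coeff_mk]
          rw [if_pos h1, if_neg (by intro hcon; exact lt_irrefl _ hcon.2), mul_zero, sub_zero]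
          exact (hchar q hq1 hqg).1
        · have hlt : M k < q := lt_of_le_of_ne (hMle k) hMq
          have h1 := hM1 k
          have hne : (ζ^k)^(β (M k)) ≠ 1 := by
            rcases hMspec k with h | h
            · exact absurd h hMq
            · exact h.2
          have hMg : M k ≤ g := le_trans (hMle k) hqg
          have hane : a (β (M k)) ≠ 0 := (hchar (M k) h1 hMg).1
          simp only [map_sub, hσ, PowerSeries.coeff_rescale, PowerSeries.coeff_mk]
          rw [if_pos (hβle 0 (M k) (Nat.zero_le _) hMg),
            if_pos ⟨he'β (M k) hlt, hβlt (M k) q hlt hqg⟩]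
          intro hcon
          rw [sub_eq_zero] at hcon
          exact hne (mul_right_cancel₀ hane (hcon.symm.trans (one_mul _).symm))
      · intro j hj
        simp only [map_sub, hσ, PowerSeries.coeff_rescale, PowerSeries.coeff_mk]
        by_cases haj : a j = 0
        · rw [haj]
          simp
        · have hb0j : β 0 ≤ j := le_of_not_gt fun h => haj (ha0 j h)
          have hMg : M k ≤ g := le_trans (hMle k) hqg
          have hjq : j < β q := lt_of_lt_of_le hj (hβle (M k) q (hMle k) hqg)
          have he'j : e (q-1) ∣ j := by
            by_contra h
            exact absurd ((hchar q hq1 hqg).2.2 j haj h) (not_le.mpr hjq)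
          have hemj : e (M k - 1) ∣ j := by
            by_contra h
            exact absurd ((hchar (M k) (hM1 k) hMg).2.2 j haj h) (not_le.mpr hj)
          have hz1 : (ζ^k)^j = 1 := by
            have h1 : (ζ^k)^(e (M k - 1)) = 1 := by
              rw [he (M k - 1)]
              apply hzE
              intro i hi1 hi2
              have := hM1 k
              exact hMmin k i hi1 (by omega)
            exact hpowdvd _ _ _ hemj h1
          rw [if_pos hb0j, if_pos ⟨he'j, hjq⟩, hz1, one_mul, sub_self]
    rw [Finset.sum_congr rfl (fun k _ => horder k)]
    have key : ∑ k ∈ Finset.range N, β (M k) = β' q := by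
      have htel : ∀ jj, 1 ≤ jj → jj ≤ q →
          β jj = β 1 + ∑ m ∈ Finset.Ico 1 jj, (β (m+1) - β m) := by
        intro jj h1
        induction jj, h1 using Nat.le_induction with
        | base => intro _; simp
        | succ jj h1 ih =>
          intro hjq
          rw [Finset.sum_Ico_succ_top h1]
          have hmono : β jj ≤ β (jj + 1) := le_of_lt (hβmono jj (by omega))
          have hih := ih (by omega)
          omega
      have hIco : ∀ k, Finset.Ico 1 (M k) = (Finset.Ico 1 q).filter (fun m => m < M k) := by
        intro k
        have := hMle k
        ext m
        simp only [Finset.mem_Ico, Finset.mem_filter]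
        omega
      have hsum1 : ∀ k ∈ Finset.range N,
          β (M k) = β 1 + ∑ m ∈ Finset.Ico 1 q, (if m < M k then β (m+1) - β m else 0) := by
        intro k _
        rw [htel (M k) (hM1 k) (hMle k), hIco k, Finset.sum_filter]
      rw [Finset.sum_congr rfl hsum1, Finset.sum_add_distrib, Finset.sum_const,
        Finset.card_range, smul_eq_mul, Finset.sum_comm]
      have hinner : ∀ m ∈ Finset.Ico 1 q,
          (∑ k ∈ Finset.range N, if m < M k then β (m+1) - β m else 0)
            = (β (m+1) - β m) * (e m / e (q-1)) := by
        intro m hm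
        rw [Finset.mem_Ico] at hm
        have hcardm : ((Finset.range N).filter (fun k => m < M k)).card = e m / e (q-1) := by
          set c := Nat.gcd N (e m) with hc
          have hcpos : 0 < c := Nat.gcd_pos_of_pos_left _ hNpos
          have hcN : c ∣ N := Nat.gcd_dvd_left _ _
          have hcem : c ∣ e m := Nat.gcd_dvd_right _ _
          have hfilter : (Finset.range N).filter (fun k => m < M k)
              = (Finset.range N).filter (fun k => (N / c) ∣ k) := by
            apply Finset.filter_congr
            intro k hk
            rw [hMgt k m hm.2]
            constructor
            · intro hall
              have h1 : (ζ^k)^(e m) = 1 := by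
                rw [he m]; exact hzE k m hall
              have h2 : N ∣ k * e m := by
                rw [← hζ.pow_eq_one_iff_dvd, pow_mul]
                exact h1
              have hco : Nat.Coprime (N / c) (e m / c) := Nat.coprime_div_gcd_div_gcd hcpos
              apply hco.dvd_of_dvd_mul_right
              have h3 : (N / c) * c ∣ (k * (e m / c)) * c := by
                rw [Nat.div_mul_cancel hcN, mul_assoc, Nat.div_mul_cancel hcem]
                exact h2
              exact (mul_dvd_mul_iff_right (show c ≠ 0 by omega)).mp h3
            · intro hdvd m' h1 hm'
              obtain ⟨d, hd⟩ := hdvd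
              have h2 : N ∣ k * e m := by
                rw [hd]
                calc N = (N / c) * c := (Nat.div_mul_cancel hcN).symm
                _ ∣ ((N / c) * d) * e m := mul_dvd_mul (dvd_mul_right _ _) hcem
              have h3 : (ζ^k)^(e m) = 1 := by
                rw [← pow_mul]
                exact (hζ.pow_eq_one_iff_dvd _).mpr h2
              exact hpowdvd _ _ _ (hedvdβ m m' hm') h3
          rw [hfilter, my_card_multiples _ _ (Nat.div_dvd_of_dvd hcN),
            Nat.div_div_self hcN (by omega)]
          -- goal : c = e m / e (q-1)
          have hu : e (q-1) ∣ e m := heemono (q-1) m (by omega)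
          have huem : (e m / e (q-1)) * e (q-1) = e m := Nat.div_mul_cancel hu
          have huN : (e m / e (q-1)) ∣ N := by
            have h5 : e m ∣ N * e (q-1) := by
              rw [mul_comm, heN]
              exact hedvdβ m 0 (Nat.zero_le m)
            rw [← huem] at h5
            exact (mul_dvd_mul_iff_right (show e (q-1) ≠ 0 by have := hepos (q-1); omega)).mp h5
          apply Nat.dvd_antisymm
          · have hc1 : Nat.Coprime c (e (q-1)) := Nat.Coprime.coprime_dvd_left hcN hcop
            apply hc1.dvd_of_dvd_mul_right
            rw [huem]
            exact hcem
          · exact Nat.dvd_gcd huN (Nat.div_dvd_of_dvd hu)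
        rw [← Finset.sum_filter, Finset.sum_const, smul_eq_mul, hcardm, mul_comm]
      rw [Finset.sum_congr rfl hinner]
      -- goal : N * β 1 + ∑ m ∈ Ico 1 q, (β (m+1) - β m) * (e m / e (q-1)) = β' q
      have he0 : e 0 = β 0 := by
        rw [he 0]
        simp
      have hT : ∀ i, 1 ≤ i → i ≤ g →
          e (i-1) * β' i = β 0 * β 1 + ∑ m ∈ Finset.Ico 1 i, e m * (β (m+1) - β m) := by
        intro i h1
        induction i, h1 using Nat.le_induction with
        | base =>
          intro _
          simp only [Finset.Ico_self, Finset.sum_empty, add_zero]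
          show e 0 * β' 1 = β 0 * β 1
          rw [he0, hβ'1]
        | succ i h1 ih =>
          intro hig
          have hig' : i ≤ g := by omega
          have hilt : i < g := by omega
          have hrec := hβ'rec i h1 hilt
          have hnv : e i * n i = e (i-1) := by
            rw [hn i h1]
            exact Nat.mul_div_cancel' (heemono i (i-1) (by omega))
          have hD : β (i+1) = β i + (β (i+1) - β i) := by
            have := hβmono i hilt; omega
          rw [show i + 1 - 1 = i from rfl, Finset.sum_Ico_succ_top h1, ← add_assoc, ← ih hig']
          have hmul := congrArg (fun x => e i * x) hrec
          simp only [mul_add] at hmul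
          rw [← mul_assoc, hnv] at hmul
          rw [hD, mul_add] at hmul
          have hfin : e i * β' (i+1) + e i * β i
              = (e (i-1) * β' i + e i * (β (i+1) - β i)) + e i * β i := by
            rw [hmul]; ring
          exact Nat.add_right_cancel hfin
      have hqT := hT q hq1 hqg
      apply Nat.eq_of_mul_eq_mul_left (hepos (q-1))
      rw [mul_add, Finset.mul_sum]
      have hterm : ∀ m ∈ Finset.Ico 1 q,
          e (q-1) * ((β (m+1) - β m) * (e m / e (q-1))) = e m * (β (m+1) - β m) := by
        intro m hm
        rw [Finset.mem_Ico] at hm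
        have hu : e (q-1) ∣ e m := heemono (q-1) m (by omega)
        rw [mul_comm (β (m+1) - β m) (e m / e (q-1)), ← mul_assoc,
          Nat.mul_div_cancel' hu, mul_comm]
      rw [Finset.sum_congr rfl hterm, ← mul_assoc, heN, hqT]
    rw [← Nat.cast_sum, key]
  · -- degenerate case : contradiction
    exfalso
    have hcpos : 0 < Nat.gcd N (e (q-1)) := Nat.gcd_pos_of_pos_left _ hNpos
    have hc1 : 1 < Nat.gcd N (e (q-1)) := by omega
    obtain ⟨ω, hωprim⟩ : ∃ w : ℂ, IsPrimitiveRoot w (β 0) :=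
      ⟨_, Complex.isPrimitiveRoot_exp (β 0) (by omega)⟩
    have hφC : ∀ r : ℂ, φ (Polynomial.C r) = PowerSeries.C r := by
      intro r
      simp [hφ, PowerSeries.algebraMap_apply]
    have hφX : φ Polynomial.X = (PowerSeries.X : PowerSeries ℂ) ^ (β 0) := by
      simp [hφ]
    have hcomm : (PowerSeries.rescale ω).comp φ = φ := by
      apply Polynomial.ringHom_ext
      · intro r
        rw [RingHom.comp_apply, hφC, my_rescale_C]
      · rw [RingHom.comp_apply, hφX, map_pow, PowerSeries.rescale_X, mul_pow,
          ← map_pow, hωprim.pow_eq_one, map_one, one_mul]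
    have h2 := congrArg (Polynomial.map (PowerSeries.rescale ω)) hgq
    rw [Polynomial.map_map, hcomm, hgq, Polynomial.map_prod] at h2
    simp only [Polynomial.map_sub, Polynomial.map_X, Polynomial.map_C] at h2
    have h3 := congrArg (Polynomial.eval (PowerSeries.rescale ω σ)) h2
    rw [Polynomial.eval_prod, Polynomial.eval_prod] at h3
    simp only [Polynomial.eval_sub, Polynomial.eval_X, Polynomial.eval_C] at h3
    have hzero : ∏ k ∈ Finset.range N,
        (PowerSeries.rescale ω σ - PowerSeries.rescale ω (PowerSeries.rescale (ζ^k) σ)) = 0 := by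
      apply Finset.prod_eq_zero (Finset.mem_range.mpr hNpos)
      rw [pow_zero, PowerSeries.rescale_one]
      simp
    rw [hzero] at h3
    obtain ⟨k, hk, hkeq⟩ := Finset.prod_eq_zero_iff.mp h3
    rw [sub_eq_zero] at hkeq
    have hcoeffeq : ∀ j : ℕ, ω^j * (PowerSeries.coeff j σ)
        = (ζ^k)^j * (PowerSeries.coeff j σ) := by
      intro j
      have h4 := congrArg (PowerSeries.coeff j) hkeq
      rwa [PowerSeries.coeff_rescale, PowerSeries.coeff_rescale] at h4
    have hωpow : ∀ i, 1 ≤ i → i < q → ω ^ (β i) = (ζ^k) ^ (β i) := by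
      intro i h1 hiq
      have hcoef : PowerSeries.coeff (β i) σ = a (β i) := by
        rw [hσ, PowerSeries.coeff_mk, if_pos ⟨he'β i hiq, hβlt i q hiq hqg⟩]
      have hane : a (β i) ≠ 0 := (hchar i h1 (by omega)).1
      have h5 := hcoeffeq (β i)
      rw [hcoef] at h5
      exact mul_right_cancel₀ hane h5
    have hζk0 : (ζ^k) ≠ 0 := pow_ne_zero _ hζ0
    set u : ℂ := ω * (ζ^k)⁻¹ with hu
    have hupow : ∀ i, i < q → u ^ (β i) = 1 := by
      intro i hiq
      rw [hu, mul_pow, inv_pow]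
      rcases Nat.eq_zero_or_pos i with rfl | h1
      · rw [hωprim.pow_eq_one, hzb0 k, inv_one, one_mul]
      · rw [hωpow i h1 hiq, mul_inv_cancel₀ (pow_ne_zero _ hζk0)]
    have hue : u ^ (e (q-1)) = 1 := by
      rw [← orderOf_dvd_iff_pow_eq_one, he'q]
      apply Finset.dvd_gcd
      intro i hi
      exact orderOf_dvd_of_pow_eq_one (hupow i (Finset.mem_range.mp hi))
    have hωe : ω ^ (e (q-1)) = (ζ^k) ^ (e (q-1)) := by
      have h5 : ω ^ (e (q-1)) * ((ζ^k)^(e (q-1)))⁻¹ = 1 := by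
        rw [← inv_pow, ← mul_pow]
        exact hue
      rwa [mul_inv_eq_one₀ (pow_ne_zero _ hζk0)] at h5
    set c := Nat.gcd N (e (q-1)) with hc
    have hcN : c ∣ N := Nat.gcd_dvd_left _ _
    have hce : c ∣ e (q-1) := Nat.gcd_dvd_right _ _
    obtain ⟨v, hv⟩ := hce
    have hpow1 : (ζ^k) ^ (e (q-1) * (N / c)) = 1 := by
      have hEN : e (q-1) * (N / c) = v * N := by
        rw [hv, mul_comm c v, mul_assoc, Nat.mul_div_cancel' hcN]
      have hζkN : (ζ^k)^N = 1 := by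
        rw [← pow_mul, mul_comm k N, pow_mul, hζN, one_pow]
      exact hpowdvd _ _ _ (by rw [hEN]; exact dvd_mul_left N v) hζkN
    have hωpow1 : ω ^ (e (q-1) * (N / c)) = 1 := by
      rw [pow_mul, hωe, ← pow_mul]
      exact hpow1
    have hdvd := (hωprim.pow_eq_one_iff_dvd _).mp hωpow1
    have hNc : N / c < N := Nat.div_lt_self hNpos hc1
    have hNcpos : 0 < N / c := Nat.div_pos (Nat.le_of_dvd hNpos hcN) (by omega)
    have hlt : e (q-1) * (N / c) < β 0 := by
      rw [← heN]
      exact (mul_lt_mul_iff_right₀ (hepos (q-1))).mpr hNc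
    have hpos : 0 < e (q-1) * (N / c) := Nat.mul_pos (hepos _) hNcpos
    exact absurd (Nat.le_of_dvd hpos hdvd) (not_le.mpr hlt)
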